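/- Let ⊑ be a stable preorder on ⟨ℤ,+⟩ (a reflexive transitive relation with x ⊑ y implying (x+z) ⊑ (y+z) for all z ∈ ℤ) that contains the usual order (x ≤ y implies x ⊑ y) and strictly contains it (there exist a, b ∈ ℤ with b < a and a ⊑ b). Then ⊑ is the total relation: u ⊑ v for all u, v ∈ ℤ. Consequently the usual order ≤ on ℤ is not an intersection of finite index stable preorders, so ⟨ℤ,+⟩ is not sp-residually finite. -/

import Mathlib

/-- A stable preorder on ⟨ℤ,+⟩: a reflexive transitive relation compatible with addition. -/
def IsStablePreorderZ (r : ℤ → ℤ → Prop) : Prop :=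
  (∀ x, r x x) ∧ (∀ x y z : ℤ, r x y → r y z → r x z) ∧
    (∀ x y z : ℤ, r x y → r (x + z) (y + z))

/-- A relation has finite index if the associated equivalence
`x ≈ y ⇔ (r x y ∧ r y x)` has finitely many classes. -/
def FiniteIndexZ (r : ℤ → ℤ → Prop) : Prop :=
  Set.Finite {s : Set ℤ | ∃ x : ℤ, s = {y | r x y ∧ r y x}}

lemma total_of_strict (r : ℤ → ℤ → Prop) (hsp : IsStablePreorderZ r)
    (hle : ∀ x y : ℤ, x ≤ y → r x y)
    (hstrict : ∃ a b : ℤ, b < a ∧ r a b) : ∀ u v : ℤ, r u v := by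
  obtain ⟨hrefl, htrans, hadd⟩ := hsp
  obtain ⟨a, b, hba, hab⟩ := hstrict
  set d : ℤ := a - b with hd
  have hdpos : 0 < d := by omega
  have h0 : r 0 (-d) := by
    have := hadd a b (-a) hab
    have heq : b + -a = -d := by rw [hd]; ring
    rw [add_neg_cancel, heq] at this
    exact this
  have hstep : ∀ n : ℕ, r 0 (-(n * d)) := by
    intro n
    induction n with
    | zero => simpa using hrefl 0
    | succ n ih =>
      have h2 : r (-(n * d)) (-((n + 1 : ℕ) * d)) := by
        have := hadd 0 (-d) (-(n * d)) h0
        have heq : -d + -((n : ℤ) * d) = -(((n : ℕ) + 1 : ℕ) * d) := by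
          push_cast; ring
        simpa [heq] using this
      exact htrans _ _ _ ih h2
  intro u v
  set n : ℕ := (u - v).toNat with hn
  have h1 : r u (u - n * d) := by
    have := hadd 0 (-(n * d)) u (hstep n)
    have heq : -((n : ℤ) * d) + u = u - n * d := by ring
    simpa [heq] using this
  have h2 : u - (n : ℤ) * d ≤ v := by
    have h3 : (u - v) ≤ (n : ℤ) := by simp [hn]
    have hn0 : (0:ℤ) ≤ (n:ℤ) := Int.natCast_nonneg n
    nlinarith
  exact htrans _ _ _ h1 (hle _ _ h2)

theorem stmt_19 (r : ℤ → ℤ → Prop) (hsp : IsStablePreorderZ r)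
    (hle : ∀ x y : ℤ, x ≤ y → r x y)
    (hstrict : ∃ a b : ℤ, b < a ∧ r a b) :
    -- r is the total relation
    (∀ u v : ℤ, r u v) ∧
    -- consequently ≤ is not an intersection of finite index stable preorders,
    -- so ⟨ℤ,+⟩ is not sp-residually finite
    ¬ ∃ (I : Type) (fam : I → ℤ → ℤ → Prop),
        (∀ i, IsStablePreorderZ (fam i) ∧ FiniteIndexZ (fam i)) ∧
        (∀ x y : ℤ, x ≤ y ↔ ∀ i, fam i x y) := by
  constructor
  · exact total_of_strict r hsp hle hstrict
  · rintro ⟨I, fam, hfam, hiff⟩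
    have htot : ∀ i, ∀ u v : ℤ, fam i u v := by
      intro i
      obtain ⟨hsp', hfin⟩ := hfam i
      have hle' : ∀ x y : ℤ, x ≤ y → fam i x y := fun x y h => (hiff x y).mp h i
      -- pigeonhole: two distinct integers in the same class
      have : ∃ a b : ℤ, b < a ∧ fam i a b := by
        haveI := hfin.to_subtype
        set S := {s : Set ℤ | ∃ x : ℤ, s = {y | fam i x y ∧ fam i y x}}
        let f : ℤ → S := fun x => ⟨{y | fam i x y ∧ fam i y x}, ⟨x, rfl⟩⟩
        obtain ⟨x, y, hxy, hfxy⟩ := Finite.exists_ne_map_eq_of_infinite f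
        have hsets : {z | fam i x z ∧ fam i x z → True} = _ := rfl
        have heq : ({z | fam i x z ∧ fam i z x} : Set ℤ) = {z | fam i y z ∧ fam i z y} := by
          exact congrArg Subtype.val hfxy
        have hx : x ∈ ({z | fam i y z ∧ fam i z y} : Set ℤ) := by
          rw [← heq]; exact ⟨hsp'.1 x, hsp'.1 x⟩
        rcases lt_or_gt_of_ne hxy with h | h
        · exact ⟨y, x, h, hx.1⟩
        · exact ⟨x, y, h, hx.2⟩
      exact total_of_strict (fam i) hsp' hle' this
    have : (1 : ℤ) ≤ 0 := (hiff 1 0).mpr (fun i => htot i 1 0)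
    omega
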